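/- Let $K \subset F$ be a finite simple field extension with $[F:K] = n$ and assume $K$ is infinite. Then $\psi(F,K) + \phi(F,K) = n$. -/

import Mathlib

open IntermediateField Module

lemma aux_primsub (K F : Type*) [Field K] [Field F] [Algebra K F] [Infinite K]
    [FiniteDimensional K F] [Finite (IntermediateField K F)]
    (ψ : ℕ) (hub : ∀ M : IntermediateField K F, M ≠ ⊤ → Module.finrank K M ≤ ψ)
    (k : ℕ) (hk : k + ψ ≤ Module.finrank K F) :
    ∃ V : Submodule K F, Module.finrank K V = k ∧
      ∀ M : IntermediateField K F, M ≠ ⊤ →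
        V ⊓ (Subalgebra.toSubmodule M.toSubalgebra) = ⊥ := by
  induction k with
  | zero => exact ⟨⊥, finrank_bot K F, fun M _ => by simp⟩
  | succ k ih =>
    obtain ⟨V, hVrank, hVM⟩ := ih (by omega)
    have hVfr : Module.finrank K V < Module.finrank K F := by omega
    have hVne : V ≠ ⊤ := by
      intro h
      rw [h, finrank_top] at hVfr; omega
    set p : Option {M : IntermediateField K F // M ≠ ⊤} → Subspace K F :=
      fun o => o.elim V (fun M => V ⊔ Subalgebra.toSubmodule M.1.toSubalgebra) with hp
    have hne : ∀ i, p i ≠ ⊤ := by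
      rintro (_ | ⟨M, hM⟩)
      · exact hVne
      · intro h
        have h1 : Module.finrank K (V ⊔ Subalgebra.toSubmodule M.toSubalgebra : Submodule K F)
            ≤ Module.finrank K V + Module.finrank K M :=
          Submodule.finrank_add_le_finrank_add_finrank _ _
        rw [show (V ⊔ Subalgebra.toSubmodule M.toSubalgebra : Submodule K F) = ⊤ from h,
          finrank_top] at h1
        have := hub M hM
        omega
    haveI := Fintype.ofFinite {M : IntermediateField K F // M ≠ ⊤}
    have hcov : ⋃ i, (p i : Set F) ≠ Set.univ := by
      intro h
      obtain ⟨i, hi⟩ := Subspace.exists_eq_top_of_iUnion_eq_univ h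
      exact hne i hi
    obtain ⟨x, hx⟩ : ∃ x : F, ∀ i, x ∉ p i := by
      rw [Set.ne_univ_iff_exists_notMem] at hcov
      obtain ⟨x, hx⟩ := hcov
      exact ⟨x, fun i hi => hx (Set.mem_iUnion.2 ⟨i, hi⟩)⟩
    have hxV : x ∉ V := hx none
    have hx0 : x ≠ 0 := fun h => hxV (h ▸ V.zero_mem)
    refine ⟨V ⊔ K ∙ x, ?_, ?_⟩
    · have hinf : V ⊓ (K ∙ x) = ⊥ := by
        rw [Submodule.eq_bot_iff]
        rintro y ⟨hy1, hy2⟩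
        obtain ⟨c, rfl⟩ := Submodule.mem_span_singleton.1 hy2
        rcases eq_or_ne c 0 with rfl | hc
        · simp
        · exact absurd (by simpa [hc] using V.smul_mem c⁻¹ hy1) hxV
      have := Submodule.finrank_sup_add_finrank_inf_eq V (K ∙ x)
      rw [hinf, finrank_bot, finrank_span_singleton hx0, hVrank] at this
      omega
    · intro M hM
      rw [Submodule.eq_bot_iff]
      rintro y ⟨hy1, hy2⟩
      obtain ⟨v, hv, w, hw, rfl⟩ := Submodule.mem_sup.1 hy1
      obtain ⟨c, rfl⟩ := Submodule.mem_span_singleton.1 hw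
      rcases eq_or_ne c 0 with rfl | hc
      · have : v ∈ V ⊓ Subalgebra.toSubmodule M.toSubalgebra := ⟨hv, by simpa using hy2⟩
        rw [hVM M hM] at this
        simpa using this
      · exfalso
        apply hx (some ⟨M, hM⟩)
        have : c • x = (v + c • x) - v := by ring
        have hmem : c • x ∈ V ⊔ Subalgebra.toSubmodule M.toSubalgebra := by
          rw [this]
          exact Submodule.sub_mem _ (Submodule.mem_sup_right hy2) (Submodule.mem_sup_left hv)
        have := Submodule.smul_mem _ c⁻¹ hmem
        simpa [hc, hp] using this

/-- The primitive subspace theorem: for a finite simple field extension `K ⊂ F`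
of degree `n` with `K` infinite, `ψ(F,K) + φ(F,K) = n`, where `ψ(F,K)` is the
largest degree `[M:K]` of a proper intermediate field `M`, and `φ(F,K)` is the
largest dimension of a primitive `K`-subspace of `F` (a subspace all of whose
nonzero elements generate `F` over `K`). -/
theorem stmt1 (K F : Type*) [Field K] [Field F] [Algebra K F] [Infinite K]
    [FiniteDimensional K F] (n : ℕ) (hn : Module.finrank K F = n)
    (hsimple : ∃ α : F, IntermediateField.adjoin K {α} = ⊤)
    (ψ φ : ℕ)
    (hψ : IsGreatest
      {d : ℕ | ∃ M : IntermediateField K F, M ≠ ⊤ ∧ Module.finrank K M = d} ψ)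
    (hφ : IsGreatest
      {d : ℕ | ∃ V : Submodule K F,
        (∀ a ∈ V, a ≠ 0 → IntermediateField.adjoin K {a} = ⊤) ∧
        Module.finrank K V = d} φ) :
    ψ + φ = n := by
  classical
  haveI : Algebra.IsAlgebraic K F := Algebra.IsAlgebraic.of_finite K F
  haveI : Finite (IntermediateField K F) :=
    Field.finite_intermediateField_of_exists_primitive_element K F hsimple
  obtain ⟨⟨M0, hM0, hM0d⟩, hψub⟩ := hψ
  obtain ⟨⟨V0, hV0prim, hV0d⟩, hφub⟩ := hφ
  -- finrank of any intermediate field as a submodule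
  have hfrM : ∀ M : IntermediateField K F,
      Module.finrank K (Subalgebra.toSubmodule M.toSubalgebra) = Module.finrank K M :=
    fun M => rfl
  have hub : ∀ M : IntermediateField K F, M ≠ ⊤ → Module.finrank K M ≤ ψ :=
    fun M hM => hψub ⟨M, hM, rfl⟩
  -- ψ < n
  have hψlt : ψ < n := by
    have hMne : Subalgebra.toSubmodule M0.toSubalgebra ≠ ⊤ := by
      intro h
      apply hM0
      rw [eq_top_iff]
      intro x _
      have : x ∈ (⊤ : Submodule K F) := trivial
      rw [← h] at this
      exact this
    have := Submodule.finrank_lt (K := K) (V := F) hMne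
    rw [hfrM, hM0d, hn] at this
    exact this
  -- φ + ψ ≤ n
  have hle : φ + ψ ≤ n := by
    have hinf : V0 ⊓ Subalgebra.toSubmodule M0.toSubalgebra = ⊥ := by
      rw [Submodule.eq_bot_iff]
      rintro a ⟨ha1, ha2⟩
      by_contra ha0
      have htop := hV0prim a ha1 ha0
      have : IntermediateField.adjoin K {a} ≤ M0 := by
        rw [IntermediateField.adjoin_le_iff]
        simpa using ha2
      rw [htop] at this
      exact hM0 (top_le_iff.1 this)
    have h1 := Submodule.finrank_sup_add_finrank_inf_eq V0
      (Subalgebra.toSubmodule M0.toSubalgebra)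
    rw [hinf, finrank_bot, hfrM, hV0d, hM0d] at h1
    have h2 : Module.finrank K
        (V0 ⊔ Subalgebra.toSubmodule M0.toSubalgebra : Submodule K F) ≤ n := by
      rw [← hn]
      exact Submodule.finrank_le _
    omega
  -- φ ≥ n - ψ
  have hge : n - ψ ≤ φ := by
    obtain ⟨V, hVd, hVM⟩ := aux_primsub K F ψ hub (n - ψ) (by omega)
    refine hφub ⟨V, ?_, hVd⟩
    intro a ha ha0
    by_contra h
    have : a ∈ V ⊓ Subalgebra.toSubmodule (IntermediateField.adjoin K {a}).toSubalgebra :=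
      ⟨ha, by simpa using IntermediateField.subset_adjoin K {a} (Set.mem_singleton a)⟩
    rw [hVM _ h] at this
    exact ha0 (by simpa using this)
  omega
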